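/- arXiv:1506.05667 — 2 statements merged into one kernel-verified Lean document; each statement's English description precedes it below -/
import Mathlib

section
/- Let G₁ and G₂ be two connected non-trivial graphs on a common vertex set V and let H be a non-trivial graph. Then any metric generator for the corona product G₁⊙H is also a metric generator for G₂⊙H. -/
open SimpleGraph

/-- `S` is a metric generator for `G`: every pair of distinct vertices is
distinguished by some element of `S` via the shortest-path distance. -/
def IsMetricGen {V : Type*} (G : SimpleGraph V) (S : Set V) : Prop :=
  ∀ u v : V, u ≠ v → ∃ s ∈ S, G.dist s u ≠ G.dist s v

/-- `S` is an adjacency generator for `G`. -/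
def IsAdjGen {V : Type*} (G : SimpleGraph V) (S : Set V) : Prop :=
  ∀ x y : V, x ∉ S → y ∉ S → x ≠ y → ∃ s ∈ S, Xor' (G.Adj s x) (G.Adj s y)

/-- `S` is a simultaneous metric generator for the family `𝒢`. -/
def IsSimMetricGen {V : Type*} (𝒢 : Set (SimpleGraph V)) (S : Set V) : Prop :=
  ∀ G ∈ 𝒢, IsMetricGen G S

/-- `S` is a simultaneous adjacency generator for the family `ℋ`. -/
def IsSimAdjGen {V : Type*} (ℋ : Set (SimpleGraph V)) (S : Set V) : Prop :=
  ∀ H ∈ ℋ, IsAdjGen H S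

/-- The simultaneous metric dimension of a family of graphs. -/
noncomputable def Sd {V : Type*} (𝒢 : Set (SimpleGraph V)) : ℕ :=
  sInf {n | ∃ S : Set V, S.ncard = n ∧ IsSimMetricGen 𝒢 S}

/-- The simultaneous adjacency dimension of a family of graphs. -/
noncomputable def SdA {V : Type*} (ℋ : Set (SimpleGraph V)) : ℕ :=
  sInf {n | ∃ S : Set V, S.ncard = n ∧ IsSimAdjGen ℋ S}

/-- The adjacency dimension of a graph. -/
noncomputable def adjDim {V : Type*} (G : SimpleGraph V) : ℕ := SdA {G}

/-- `B` is an adjacency basis of `G`. -/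
def IsAdjBasis {V : Type*} (G : SimpleGraph V) (B : Set V) : Prop :=
  IsAdjGen G B ∧ B.ncard = adjDim G

/-- `B` is a simultaneous adjacency basis of the family `ℋ`. -/
def IsSimAdjBasis {V : Type*} (ℋ : Set (SimpleGraph V)) (B : Set V) : Prop :=
  IsSimAdjGen ℋ B ∧ B.ncard = SdA ℋ

/-- `D` is a dominating set of `G`. -/
def IsDomSet {V : Type*} (G : SimpleGraph V) (D : Set V) : Prop :=
  ∀ v ∉ D, ∃ u ∈ D, G.Adj u v

/-- `D` is a simultaneous dominating set of the family `𝒢`. -/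
def IsSimDomSet {V : Type*} (𝒢 : Set (SimpleGraph V)) (D : Set V) : Prop :=
  ∀ G ∈ 𝒢, IsDomSet G D

/-- The simultaneous domination number of a family of graphs. -/
noncomputable def Sgamma {V : Type*} (𝒢 : Set (SimpleGraph V)) : ℕ :=
  sInf {n | ∃ D : Set V, D.ncard = n ∧ IsSimDomSet 𝒢 D}

/-- The domination number of a graph. -/
noncomputable def domNum {V : Type*} (G : SimpleGraph V) : ℕ := Sgamma {G}

/-- `γ'(G) = min over vertices `v` of `γ(G - v)`. -/
noncomputable def gammaPrime {V : Type*} (G : SimpleGraph V) : ℕ :=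
  sInf {n | ∃ v : V, n = domNum (G.induce {v}ᶜ)}

/-- The corona product `G ⊙ H`: one copy of `G` together with a copy of `H`
for each vertex `i` of `G`, joining `i` to every vertex of its copy. -/
def corona {V V' : Type*} (G : SimpleGraph V) (H : SimpleGraph V') :
    SimpleGraph (V ⊕ V × V') where
  Adj x y :=
    match x, y with
    | Sum.inl i, Sum.inl j => G.Adj i j
    | Sum.inl i, Sum.inr p => i = p.1
    | Sum.inr p, Sum.inl j => p.1 = j
    | Sum.inr p, Sum.inr q => p.1 = q.1 ∧ H.Adj p.2 q.2
  symm := by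
    refine ⟨?_⟩
    rintro (i | p) (j | q) h
    · exact G.adj_symm h
    · exact h.symm
    · exact h.symm
    · exact ⟨h.1.symm, H.adj_symm h.2⟩
  loopless := by
    refine ⟨?_⟩
    rintro (i | p) h
    · exact G.irrefl h
    · exact H.irrefl h.2

/-- The family `{G ⊙ H : G ∈ 𝒢, H ∈ ℋ}` of corona products. -/
def coronaFam {V V' : Type*} (𝒢 : Set (SimpleGraph V)) (ℋ : Set (SimpleGraph V')) :
    Set (SimpleGraph (V ⊕ V × V')) :=
  {K | ∃ G ∈ 𝒢, ∃ H ∈ ℋ, K = corona G H}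

/-- The join `G + H` of two (vertex-disjoint) graphs. -/
def joinG {V₁ V₂ : Type*} (G : SimpleGraph V₁) (H : SimpleGraph V₂) :
    SimpleGraph (V₁ ⊕ V₂) where
  Adj x y :=
    match x, y with
    | Sum.inl a, Sum.inl b => G.Adj a b
    | Sum.inl _, Sum.inr _ => True
    | Sum.inr _, Sum.inl _ => True
    | Sum.inr a, Sum.inr b => H.Adj a b
  symm := by
    refine ⟨?_⟩
    rintro (a | a) (b | b) h
    · exact G.adj_symm h
    · trivial
    · trivial
    · exact H.adj_symm h
  loopless := by
    refine ⟨?_⟩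
    rintro (a | a) h
    · exact G.irrefl h
    · exact H.irrefl h

/-- The family `{G + H : G ∈ 𝒢, H ∈ ℋ}` of joins. -/
def joinFam {V₁ V₂ : Type*} (𝒢 : Set (SimpleGraph V₁)) (ℋ : Set (SimpleGraph V₂)) :
    Set (SimpleGraph (V₁ ⊕ V₂)) :=
  {K | ∃ G ∈ 𝒢, ∃ H ∈ ℋ, K = joinG G H}

/-- The family `𝒢_B(G)`: all graphs `G'` such that, for some permutation `f` of the
vertex set fixing `B` pointwise, `N_{G'}(x) = f(N_G(x))` for every `x ∈ B`. -/
def GBfam {V : Type*} (G : SimpleGraph V) (B : Set V) : Set (SimpleGraph V) :=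
  {G' | ∃ f : Equiv.Perm V, (∀ x ∈ B, f x = x) ∧
    ∀ x ∈ B, G'.neighborSet x = f '' (G.neighborSet x)}

section Aux
variable {V V' : Type*} {G : SimpleGraph V} {H : SimpleGraph V'}

/-- Sum.inl as a graph hom G →g corona G H -/
def coronaInl (G : SimpleGraph V) (H : SimpleGraph V') : G →g corona G H where
  toFun := Sum.inl
  map_rel' := fun h => h

lemma corona_connected (hG : G.Connected) : (corona G H).Connected := by
  have hne : Nonempty V := hG.nonempty
  constructor
  · intro x y
    have base : ∀ z : V ⊕ V × V', ∃ i : V, (corona G H).Reachable z (Sum.inl i) := by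
      rintro (i | p)
      · exact ⟨i, Reachable.refl _⟩
      · exact ⟨p.1, (Adj.reachable (by show p.1 = p.1; rfl))⟩
    obtain ⟨i, hi⟩ := base x
    obtain ⟨j, hj⟩ := base y
    exact hi.trans (((hG.preconnected i j).map (coronaInl G H)).trans hj.symm)


lemma exit_walk_le {i : V} {v : V'} (hG : G.Connected) :
    ∀ {s t : V ⊕ V × V'} (p : (corona G H).Walk s t), t = Sum.inr (i, v) →
      (∀ w : V', s ≠ Sum.inr (i, w)) →
      (corona G H).dist s (Sum.inl i) + 1 ≤ p.length := by
  have hK : (corona G H).Connected := corona_connected hG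
  intro s t p
  induction p with
  | nil => rintro rfl hs; exact absurd rfl (hs v)
  | @cons s b _ hadj q ih =>
    rintro rfl hs
    by_cases hb : ∃ w : V', b = Sum.inr (i, w)
    · obtain ⟨w, rfl⟩ := hb
      -- s adjacent to inr (i,w), s not of that form, so s = inl i
      have hsi : s = Sum.inl i := by
        match s, hadj with
        | Sum.inl k, hadj => exact congrArg Sum.inl hadj
        | Sum.inr (a, b), hadj =>
          exact absurd (by rw [show a = i from hadj.1] :
            (Sum.inr (a, b) : V ⊕ V × V') = Sum.inr (i, b)) (hs b)
      subst hsi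
      simp [SimpleGraph.Walk.length_cons, SimpleGraph.dist_self]
    · push_neg at hb
      have h1 : (corona G H).dist b (Sum.inl i) + 1 ≤ q.length := ih rfl hb
      have h2 : (corona G H).dist s (Sum.inl i) ≤
          (corona G H).dist s b + (corona G H).dist b (Sum.inl i) := hK.dist_triangle
      have h3 : (corona G H).dist s b ≤ 1 := SimpleGraph.dist_le hadj.toWalk
      simp only [SimpleGraph.Walk.length_cons]
      omega

lemma exit_dist {i : V} (v : V') (hG : G.Connected) {s : V ⊕ V × V'}
    (hs : ∀ w : V', s ≠ Sum.inr (i, w)) :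
    (corona G H).dist s (Sum.inr (i, v)) = (corona G H).dist s (Sum.inl i) + 1 := by
  have hK : (corona G H).Connected := corona_connected hG
  apply le_antisymm
  · obtain ⟨p, hp⟩ := hK.exists_walk_length_eq_dist s (Sum.inl i)
    have : (corona G H).dist s (Sum.inr (i, v)) ≤
        (p.concat (show (corona G H).Adj (Sum.inl i) (Sum.inr (i, v)) from rfl)).length :=
      SimpleGraph.dist_le _
    simpa [SimpleGraph.Walk.length_concat, hp] using this
  · obtain ⟨p, hp⟩ := hK.exists_walk_length_eq_dist s (Sum.inr (i, v))
    exact hp ▸ exit_walk_le hG p rfl hs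

open Classical in
lemma in_dist (hG : G.Connected) (i : V) (w u : V') :
    (corona G H).dist (Sum.inr (i, w)) (Sum.inr (i, u)) =
      if w = u then 0 else if H.Adj w u then 1 else 2 := by
  have hK : (corona G H).Connected := corona_connected hG
  split_ifs with h1 h2
  · subst h1; exact SimpleGraph.dist_self
  · exact SimpleGraph.dist_eq_one_iff_adj.2 ⟨rfl, h2⟩
  · have hne : (Sum.inr (i, w) : V ⊕ V × V') ≠ Sum.inr (i, u) := by simp [h1]
    have hpos := hK.pos_dist_of_ne hne
    have hn1 : (corona G H).dist (Sum.inr (i, w)) (Sum.inr (i, u)) ≠ 1 := by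
      intro hc
      exact h2 (SimpleGraph.dist_eq_one_iff_adj.1 hc).2
    have hle : (corona G H).dist (Sum.inr (i, w)) (Sum.inr (i, u)) ≤ 2 := by
      have := SimpleGraph.dist_le
        (SimpleGraph.Walk.cons (show (corona G H).Adj (Sum.inr (i, w)) (Sum.inl i) from rfl)
          (SimpleGraph.Adj.toWalk (show (corona G H).Adj (Sum.inl i) (Sum.inr (i, u)) from rfl)))
      simpa using this
    omega

lemma two_le_dist {W : Type*} {K : SimpleGraph W} (hK : K.Connected) {x y : W}
    (hne : x ≠ y) (hadj : ¬ K.Adj x y) : 2 ≤ K.dist x y := by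
  have h0 := hK.pos_dist_of_ne hne
  have h1 : K.dist x y ≠ 1 := fun h => hadj (SimpleGraph.dist_eq_one_iff_adj.1 h)
  omega


end Aux

theorem statement_0 {V V' : Type*} [Fintype V] [Fintype V'] [Nontrivial V] [Nontrivial V']
    (G₁ G₂ : SimpleGraph V) (hG₁ : G₁.Connected) (hG₂ : G₂.Connected)
    (H : SimpleGraph V') (S : Set (V ⊕ V × V'))
    (hS : IsMetricGen (corona G₁ H) S) :
    IsMetricGen (corona G₂ H) S := by
  classical
  have hK2 : (corona G₂ H).Connected := corona_connected hG₂
  have hSi : ∀ i : V, ∃ w : V', Sum.inr (i, w) ∈ S := by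
    intro i
    obtain ⟨u, v, huv⟩ := exists_pair_ne V'
    obtain ⟨s, hsS, hsd⟩ := hS (Sum.inr (i, u)) (Sum.inr (i, v)) (by simp [huv])
    by_cases hform : ∃ w, s = Sum.inr (i, w)
    · obtain ⟨w, rfl⟩ := hform; exact ⟨w, hsS⟩
    · push_neg at hform
      rw [exit_dist u hG₁ hform, exit_dist v hG₁ hform] at hsd
      exact absurd rfl hsd
  rintro (i | ⟨i, u⟩) (j | ⟨j, v⟩) hxy
  · -- inl i vs inl j
    have hij : i ≠ j := fun h => hxy (by rw [h])
    obtain ⟨w, hw⟩ := hSi i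
    refine ⟨_, hw, ?_⟩
    have h1 : (corona G₂ H).dist (Sum.inr (i, w)) (Sum.inl i) = 1 :=
      SimpleGraph.dist_eq_one_iff_adj.2 rfl
    have h2 : 2 ≤ (corona G₂ H).dist (Sum.inr (i, w)) (Sum.inl j) :=
      two_le_dist hK2 (by simp) (fun hadj => hij hadj)
    omega
  · -- inl i vs inr (j, v)
    by_cases hij : i = j
    · subst hij
      obtain ⟨k, hk⟩ := exists_ne i
      obtain ⟨w, hw⟩ := hSi k
      refine ⟨_, hw, ?_⟩
      rw [exit_dist v hG₂ (fun w' h => hk (by injection h with h'; exact (Prod.ext_iff.1 h').1))]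
      omega
    · obtain ⟨w, hw⟩ := hSi i
      refine ⟨_, hw, ?_⟩
      have h1 : (corona G₂ H).dist (Sum.inr (i, w)) (Sum.inl i) = 1 :=
        SimpleGraph.dist_eq_one_iff_adj.2 rfl
      have h2 : 2 ≤ (corona G₂ H).dist (Sum.inr (i, w)) (Sum.inl j) :=
        two_le_dist hK2 (by simp) (fun hadj => hij hadj)
      rw [exit_dist v hG₂ (fun w' h => hij (by injection h with h'; exact (Prod.ext_iff.1 h').1))]
      omega
  · -- inr (i, u) vs inl j
    by_cases hij : j = i
    · subst hij
      obtain ⟨k, hk⟩ := exists_ne j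
      obtain ⟨w, hw⟩ := hSi k
      refine ⟨_, hw, ?_⟩
      rw [exit_dist u hG₂ (fun w' h => hk (by injection h with h'; exact (Prod.ext_iff.1 h').1))]
      omega
    · obtain ⟨w, hw⟩ := hSi j
      refine ⟨_, hw, ?_⟩
      have h1 : (corona G₂ H).dist (Sum.inr (j, w)) (Sum.inl j) = 1 :=
        SimpleGraph.dist_eq_one_iff_adj.2 rfl
      have h2 : 2 ≤ (corona G₂ H).dist (Sum.inr (j, w)) (Sum.inl i) :=
        two_le_dist hK2 (by simp) (fun hadj => hij hadj)
      rw [exit_dist u hG₂ (fun w' h => hij (by injection h with h'; exact (Prod.ext_iff.1 h').1))]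
      omega
  · -- inr (i, u) vs inr (j, v)
    by_cases hij : i = j
    · subst hij
      have huv : u ≠ v := by
        intro h; exact hxy (by rw [h])
      obtain ⟨s, hsS, hsd⟩ := hS (Sum.inr (i, u)) (Sum.inr (i, v)) (by simp [huv])
      by_cases hform : ∃ w, s = Sum.inr (i, w)
      · obtain ⟨w, rfl⟩ := hform
        refine ⟨_, hsS, ?_⟩
        rw [in_dist hG₂ i w u, in_dist hG₂ i w v]
        rwa [in_dist hG₁ i w u, in_dist hG₁ i w v] at hsd
      · push_neg at hform
        rw [exit_dist u hG₁ hform, exit_dist v hG₁ hform] at hsd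
        exact absurd rfl hsd
    · obtain ⟨w, hw⟩ := hSi i
      refine ⟨_, hw, ?_⟩
      have h1 : (corona G₂ H).dist (Sum.inr (i, w)) (Sum.inr (i, u)) ≤ 2 := by
        rw [in_dist hG₂ i w u]
        split_ifs <;> omega
      have h2 : 2 ≤ (corona G₂ H).dist (Sum.inr (i, w)) (Sum.inl j) :=
        two_le_dist hK2 (by simp) (fun hadj => hij hadj)
      rw [exit_dist v hG₂ (fun w' h => hij (by injection h with h'; exact (Prod.ext_iff.1 h').1))]
      omega
end

section
/- Let 𝒢 be a family of connected non-trivial graphs on a common vertex set V. Let ℋ be a family of graphs on a common vertex set V' with |V'| ≥ 7 such that every H ∈ ℋ is a path graph, or a cycle graph, or has diameter D(H) ≥ 6, or has girth g(H) ≥ 5 and minimum degree δ(H) ≥ 3. Let K_t be a complete graph of order t ≥ 2 on a vertex set disjoint from V'. Then Sd_A(𝒢⊙(K_t+ℋ)) = |V| · Sd_A(ℋ) + |V| · (t−1) + Sγ(𝒢). -/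
open SimpleGraph

----------------------------------------------------------------
-- auxiliary lemmas
----------------------------------------------------------------

section Aux

open Classical in
lemma aux_ncard_eq_sum {α : Type*} [Fintype α] (s : Set α) :
    s.ncard = ∑ x : α, if x ∈ s then 1 else 0 := by
  rw [Set.ncard_eq_toFinset_card']
  have h : s.toFinset = Finset.univ.filter (· ∈ s) := by ext x; simp
  rw [h, Finset.card_filter]

open Classical in
lemma aux_ncard_decomp {V V' : Type*} [Fintype V] [Fintype V'] {t : ℕ}
    (S : Set (V ⊕ V × (Fin t ⊕ V'))) :
    S.ncard = {i : V | Sum.inl i ∈ S}.ncard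
      + ∑ i : V, ({c : Fin t | Sum.inr (i, Sum.inl c) ∈ S}.ncard
        + {v : V' | Sum.inr (i, Sum.inr v) ∈ S}.ncard) := by
  rw [aux_ncard_eq_sum, Fintype.sum_sum_type, Fintype.sum_prod_type,
    aux_ncard_eq_sum]
  congr 1
  apply Finset.sum_congr rfl
  intro i _
  rw [Fintype.sum_sum_type, aux_ncard_eq_sum, aux_ncard_eq_sum]
  simp only [Set.mem_setOf_eq]

lemma aux_egirth_le_len {V : Type*} {H : SimpleGraph V} {a : V} {w : H.Walk a a}
    (hw : w.IsCycle) : H.egirth ≤ w.length := by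
  rw [egirth]; exact iInf_le_of_le a (iInf_le_of_le w (iInf_le _ hw))

lemma aux_egirth_le_three {V : Type*} {H : SimpleGraph V} {a b c : V}
    (h1 : H.Adj a b) (h2 : H.Adj b c) (h3 : H.Adj c a) : H.egirth ≤ 3 := by
  have hp : (Walk.cons h2 (Walk.cons h3 Walk.nil)).IsPath := by
    simp [Walk.isPath_def, h2.ne, h3.ne, h3.ne', h1.ne', (h1.ne : a ≠ b)]
  have hc : (Walk.cons h1 (Walk.cons h2 (Walk.cons h3 Walk.nil))).IsCycle := by
    rw [Walk.cons_isCycle_iff]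
    refine ⟨hp, ?_⟩
    have n1 := h1.ne; have n2 := h2.ne; have n3 := h3.ne
    simp only [Walk.edges_cons, Walk.edges_nil, List.mem_cons, List.not_mem_nil, or_false,
      Sym2.eq, Sym2.rel_iff', Prod.mk.injEq, Prod.swap_prod_mk]
    push_neg
    aesop
  have := aux_egirth_le_len hc
  simpa using this

lemma aux_egirth_le_four {V : Type*} {H : SimpleGraph V} {a b c d : V}
    (h1 : H.Adj a b) (h2 : H.Adj b c) (h3 : H.Adj c d) (h4 : H.Adj d a)
    (hac : a ≠ c) (hbd : b ≠ d) : H.egirth ≤ 4 := by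
  have hp : (Walk.cons h2 (Walk.cons h3 (Walk.cons h4 Walk.nil))).IsPath := by
    simp [Walk.isPath_def, h2.ne, h3.ne, h4.ne, h4.ne', hbd, hac.symm, h1.ne']
  have hc : (Walk.cons h1 (Walk.cons h2 (Walk.cons h3 (Walk.cons h4 Walk.nil)))).IsCycle := by
    rw [Walk.cons_isCycle_iff]
    refine ⟨hp, ?_⟩
    have n1 := h1.ne; have n2 := h2.ne; have n3 := h3.ne; have n4 := h4.ne
    simp only [Walk.edges_cons, Walk.edges_nil, List.mem_cons, List.not_mem_nil, or_false,
      Sym2.eq, Sym2.rel_iff', Prod.mk.injEq, Prod.swap_prod_mk]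
    push_neg
    aesop
  have := aux_egirth_le_len hc
  simpa using this

open Classical in
lemma aux_no_small_gen {V' : Type*} [Fintype V'] (H : SimpleGraph V')
    (h7 : 7 ≤ Fintype.card V') (B : Set V') (hB : IsAdjGen H B)
    (h2 : B.ncard ≤ 2) : False := by
  set Bt : Finset V' := B.toFinset with hBt
  have hcard : Bt.card = B.ncard := (Set.ncard_eq_toFinset_card' B).symm
  set f : V' → Finset V' := fun v => Bt.filter (fun b => H.Adj b v) with hf
  have hinj : Set.InjOn f ↑(Finset.univ \ Bt) := by
    intro x hx y hy hxy
    by_contra hne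
    have hxB : x ∉ B := by simp [hBt] at hx; simpa [hBt] using hx
    have hyB : y ∉ B := by simp [hBt] at hy; simpa [hBt] using hy
    obtain ⟨s, hsB, hxor⟩ := hB x y hxB hyB hne
    have hsx : s ∈ f x ↔ H.Adj s x := by simp [hf, hBt, hsB]
    have hsy : s ∈ f y ↔ H.Adj s y := by simp [hf, hBt, hsB]
    rw [hxy] at hsx
    rcases hxor with ⟨h1, h2⟩ | ⟨h1, h2⟩
    · exact h2 (hsy.mp (hsx.mpr h1))
    · exact h2 (hsx.mp (hsy.mpr h1))
  have hmaps : ∀ v ∈ Finset.univ \ Bt, f v ∈ Bt.powerset := by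
    intro v _; simp only [hf, Finset.mem_powerset]; exact Finset.filter_subset _ _
  have hle := Finset.card_le_card_of_injOn f hmaps hinj
  rw [Finset.card_sdiff_of_subset (Finset.subset_univ _), Finset.card_powerset, Finset.card_univ] at hle
  have : 2 ^ Bt.card ≤ 2 ^ 2 := Nat.pow_le_pow_right (by norm_num) (by omega)
  omega

lemma aux_path_nbr_le {n : ℕ} (v : Fin n) : ((pathGraph n).neighborSet v).ncard ≤ 2 := by
  rw [← Nat.card_coe_set_eq]
  have h2 : Nat.card Bool = 2 := by simp
  rw [← h2]
  apply Nat.card_le_card_of_injective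
    (f := fun u : ((pathGraph n).neighborSet v) => decide (v.val + 1 = (u : Fin n).val))
  · rintro ⟨u1, h1⟩ ⟨u2, h2⟩ h
    replace h1 : v.val + 1 = u1.val ∨ u1.val + 1 = v.val := pathGraph_adj.mp h1
    replace h2 : v.val + 1 = u2.val ∨ u2.val + 1 = v.val := pathGraph_adj.mp h2
    simp only [decide_eq_decide] at h
    refine Subtype.ext (Fin.ext ?_)
    show u1.val = u2.val
    rcases h1 with h1 | h1 <;> rcases h2 with h2 | h2
    · omega
    · exact absurd (h.mp h1) (by omega)
    · exact absurd (h.mpr h2) (by omega)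
    · omega

lemma aux_cycle_nbr_le {n : ℕ} (h7 : 7 ≤ n) (v : Fin n) :
    ((cycleGraph n).neighborSet v).ncard ≤ 2 := by
  obtain ⟨m, rfl⟩ : ∃ m, n = m + 2 := ⟨n - 2, by omega⟩
  rw [cycleGraph_neighborSet]
  exact (Set.ncard_insert_le _ _).trans (by simp)

lemma aux_iso_nbr_card {V W : Type*} {G : SimpleGraph V} {G' : SimpleGraph W}
    (e : G ≃g G') (v : V) :
    (G.neighborSet v).ncard = (G'.neighborSet (e v)).ncard := by
  rw [← Nat.card_coe_set_eq, ← Nat.card_coe_set_eq]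
  exact Nat.card_congr (e.mapNeighborSet v)

set_option linter.unusedSectionVars false

section keycases
variable {V' : Type*} [Fintype V'] {H : SimpleGraph V'} {B : Set V'} {w : V'}

lemma aux_diam_case (h6 : 6 ≤ H.diam) (hB : IsAdjGen H B)
    (hall : ∀ b ∈ B, H.Adj b w) : False := by
  have hne_top : H.ediam ≠ ⊤ := by
    intro h
    rw [SimpleGraph.diam, h] at h6
    simp at h6
  have hfin : ∀ u v : V', H.edist u v ≠ ⊤ := by
    intro u v h
    exact hne_top (top_le_iff.mp (h ▸ edist_le_ediam))
  set good : V' → Prop := fun x => H.edist x w ≤ 2 with hgood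
  have claim1 : ∀ x, ¬ good x → x ∉ B ∧ x ≠ w ∧ ∀ b ∈ B, ¬ H.Adj b x := by
    intro x hx
    refine ⟨fun hxB => hx ?_, fun hxw => hx ?_, fun b hb hadj => hx ?_⟩
    · have : H.edist x w = 1 := edist_eq_one_iff_adj.mpr (hall x hxB)
      simp [hgood, this]
    · subst hxw; simp [hgood]
    · have h1 : H.edist x b = 1 := edist_eq_one_iff_adj.mpr hadj.symm
      have h2 : H.edist b w = 1 := edist_eq_one_iff_adj.mpr (hall b hb)
      calc H.edist x w ≤ H.edist x b + H.edist b w := SimpleGraph.edist_triangle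
        _ ≤ 2 := by rw [h1, h2]; norm_num
  have claim2 : ∀ x y, ¬ good x → ¬ good y → x = y := by
    intro x y hx hy
    by_contra hne
    obtain ⟨hxB, _, hxa⟩ := claim1 x hx
    obtain ⟨hyB, _, hya⟩ := claim1 y hy
    obtain ⟨s, hs, hxor⟩ := hB x y hxB hyB hne
    rcases hxor with ⟨h1, _⟩ | ⟨h1, _⟩
    · exact hxa s hs h1
    · exact hya s hs h1
  have claim3 : ∀ x, H.edist x w ≤ 3 := by
    intro x
    by_cases hx : good x
    · exact hx.trans (by norm_num)
    · obtain ⟨_, hxw, _⟩ := claim1 x hx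
      obtain ⟨p⟩ := reachable_of_edist_ne_top (hfin x w)
      cases p with
      | nil => exact absurd rfl hxw
      | @cons _ y _ hadj p' =>
        have hy : good y := by
          by_contra hyg
          exact hadj.ne (claim2 x y hx hyg)
        calc H.edist x w ≤ H.edist x y + H.edist y w := SimpleGraph.edist_triangle
          _ ≤ 1 + 2 := add_le_add (le_of_eq (edist_eq_one_iff_adj.mpr hadj)) hy
          _ = 3 := by norm_num
  have hediam : H.ediam ≤ 5 := by
    apply ediam_le_of_edist_le
    intro u v
    by_cases hu : good u
    · calc H.edist u v ≤ H.edist u w + H.edist w v := SimpleGraph.edist_triangle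
        _ ≤ 2 + 3 := add_le_add hu (SimpleGraph.edist_comm ▸ claim3 v)
        _ = 5 := by norm_num
    · by_cases hv : good v
      · calc H.edist u v ≤ H.edist u w + H.edist w v := SimpleGraph.edist_triangle
          _ ≤ 3 + 2 := add_le_add (claim3 u) (SimpleGraph.edist_comm ▸ hv)
          _ = 5 := by norm_num
      · rw [claim2 u v hu hv, SimpleGraph.edist_self]; norm_num
  have : H.diam ≤ 5 := by
    have := ENat.toNat_le_toNat hediam (by norm_num)
    simpa [SimpleGraph.diam] using this
  omega

lemma aux_girth_case (hg : 5 ≤ H.egirth) (hδ : ∀ v : V', 3 ≤ (H.neighborSet v).ncard)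
    (hB : IsAdjGen H B) (hw : w ∉ B) (hall : ∀ b ∈ B, H.Adj b w)
    (hBne : B.Nonempty) : False := by
  have no3 : ¬ H.egirth ≤ 3 := fun h => by
    have := hg.trans h; norm_num at this
  have no4 : ¬ H.egirth ≤ 4 := fun h => by
    have := hg.trans h; norm_num at this
  have hpnadj : ∀ b ∈ B, ∀ b' ∈ B, ¬ H.Adj b b' := by
    intro b hb b' hb' hadj
    exact no3 (aux_egirth_le_three hadj (hall b' hb') (hall b hb).symm)
  obtain ⟨b0, hb0⟩ := hBne
  have h2 : 2 ≤ (H.neighborSet b0 \ {w}).ncard := by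
    have := hδ b0
    have hd := Set.pred_ncard_le_ncard_diff_singleton (H.neighborSet b0) w
    omega
  obtain ⟨x1, x2, hx1, hx2, hne⟩ := (Set.one_lt_ncard_iff (Set.toFinite _)).mp
    (by omega : 1 < (H.neighborSet b0 \ {w}).ncard)
  obtain ⟨hx1n, hx1w⟩ := hx1
  obtain ⟨hx2n, hx2w⟩ := hx2
  have hx1B : x1 ∉ B := fun h => hpnadj b0 hb0 x1 h hx1n
  have hx2B : x2 ∉ B := fun h => hpnadj b0 hb0 x2 h hx2n
  obtain ⟨s, hs, hxor⟩ := hB x1 x2 hx1B hx2B hne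
  have hsb0 : s ≠ b0 := by
    rintro rfl
    rcases hxor with ⟨_, h2⟩ | ⟨_, h2⟩
    · exact h2 hx2n
    · exact h2 hx1n
  rcases hxor with ⟨h1, _⟩ | ⟨h1, _⟩
  · exact no4 (aux_egirth_le_four (hall s hs).symm h1 hx1n.symm (hall b0 hb0)
      (fun h => hx1w (by simp [h.symm])) hsb0)
  · exact no4 (aux_egirth_le_four (hall s hs).symm h1 hx2n.symm (hall b0 hb0)
      (fun h => hx2w (by simp [h.symm])) hsb0)

lemma aux_key (h7 : 7 ≤ Fintype.card V')
    (hc : Nonempty (H ≃g SimpleGraph.pathGraph (Fintype.card V')) ∨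
      Nonempty (H ≃g SimpleGraph.cycleGraph (Fintype.card V')) ∨
      6 ≤ H.diam ∨ (5 ≤ H.egirth ∧ ∀ v : V', 3 ≤ (H.neighborSet v).ncard))
    (hB : IsAdjGen H B) (hw : w ∉ B) : ∃ b ∈ B, ¬ H.Adj b w := by
  by_contra hcon
  push_neg at hcon
  have hBne : B.Nonempty := by
    rcases Set.eq_empty_or_nonempty B with rfl | h
    · exact (aux_no_small_gen H h7 ∅ hB (by simp)).elim
    · exact h
  rcases hc with he | he | h6 | ⟨hg, hδ⟩ <;> [skip; skip; skip; skip] <;> try obtain ⟨e⟩ := he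
  · have hsub : B ⊆ H.neighborSet w := fun b hb => (hcon b hb).symm
    have hb2 : B.ncard ≤ 2 := le_trans (Set.ncard_le_ncard hsub (Set.toFinite _))
      ((aux_iso_nbr_card e w) ▸ aux_path_nbr_le (e w))
    exact aux_no_small_gen H h7 B hB hb2
  · have hsub : B ⊆ H.neighborSet w := fun b hb => (hcon b hb).symm
    have hb2 : B.ncard ≤ 2 := le_trans (Set.ncard_le_ncard hsub (Set.toFinite _))
      ((aux_iso_nbr_card e w) ▸ aux_cycle_nbr_le h7 (e w))
    exact aux_no_small_gen H h7 B hB hb2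
  · exact aux_diam_case h6 hB hcon
  · exact aux_girth_case hg hδ hB hw hcon hBne

end keycases
end Aux

set_option maxHeartbeats 1000000 in
theorem statement_18 {V V' : Type*} [Fintype V] [Nontrivial V] [Fintype V']
    (𝒢 : Set (SimpleGraph V)) (h𝒢ne : 𝒢.Nonempty) (h𝒢 : ∀ G ∈ 𝒢, G.Connected)
    (hV' : 7 ≤ Fintype.card V')
    (ℋ : Set (SimpleGraph V')) (hℋne : ℋ.Nonempty)
    (hcond : ∀ H ∈ ℋ, Nonempty (H ≃g SimpleGraph.pathGraph (Fintype.card V')) ∨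
      Nonempty (H ≃g SimpleGraph.cycleGraph (Fintype.card V')) ∨
      6 ≤ H.diam ∨ (5 ≤ H.egirth ∧ ∀ v : V', 3 ≤ (H.neighborSet v).ncard))
    (t : ℕ) (ht : 2 ≤ t) :
    SdA (coronaFam 𝒢 (joinFam {(⊤ : SimpleGraph (Fin t))} ℋ)) =
      Fintype.card V * SdA ℋ + Fintype.card V * (t - 1) + Sgamma 𝒢 := by
  classical
  obtain ⟨G₀, hG₀⟩ := h𝒢ne
  obtain ⟨H₀, hH₀⟩ := hℋne
  set n := Fintype.card V with hn
  set a := SdA ℋ with ha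
  set γ := Sgamma 𝒢 with hγ
  -- a witness simultaneous adjacency basis of ℋ
  have hSdA_mem : a ∈ {k | ∃ S : Set V', S.ncard = k ∧ IsSimAdjGen ℋ S} := by
    rw [ha, SdA]
    exact Nat.sInf_mem ⟨(Set.univ : Set V').ncard, Set.univ, rfl,
      fun H _ x y hx _ _ => absurd (Set.mem_univ x) hx⟩
  obtain ⟨B, hBcard, hBgen⟩ := hSdA_mem
  have hγ_mem : γ ∈ {k | ∃ D : Set V, D.ncard = k ∧ IsSimDomSet 𝒢 D} := by
    rw [hγ, Sgamma]
    exact Nat.sInf_mem ⟨(Set.univ : Set V).ncard, Set.univ, rfl,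
      fun G _ v hv => absurd (Set.mem_univ v) hv⟩
  obtain ⟨Dm, hDmcard, hDmdom⟩ := hγ_mem
  have htpos : 0 < t := by omega
  set c₀ : Fin t := ⟨0, htpos⟩ with hc₀
  have hc₁ : ∃ c₁ : Fin t, c₁ ≠ c₀ := ⟨⟨1, by omega⟩, by
    intro h; rw [hc₀, Fin.mk.injEq] at h; omega⟩
  obtain ⟨c₁, hc₁⟩ := hc₁
  -- the constructed generator
  set S₀ : Set (V ⊕ V × (Fin t ⊕ V')) := {x |
    match x with
    | Sum.inl i => i ∈ Dm
    | Sum.inr (_, Sum.inl c) => c ≠ c₀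
    | Sum.inr (_, Sum.inr v) => v ∈ B} with hS₀
  have hS₀l : ∀ i : V, (Sum.inl i ∈ S₀ ↔ i ∈ Dm) := fun i => Iff.rfl
  have hS₀c : ∀ (i : V) (c : Fin t), (Sum.inr (i, Sum.inl c) ∈ S₀ ↔ c ≠ c₀) := fun i c => Iff.rfl
  have hS₀v : ∀ (i : V) (v : V'), (Sum.inr (i, Sum.inr v) ∈ S₀ ↔ v ∈ B) := fun i v => Iff.rfl
  -- cardinality of S₀
  have hcompl : ({c₀}ᶜ : Set (Fin t)).ncard = t - 1 := by
    rw [Set.compl_eq_univ_diff, Set.ncard_diff (Set.subset_univ _),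
      Set.ncard_univ, Set.ncard_singleton, Nat.card_eq_fintype_card, Fintype.card_fin]
  have hS₀card : S₀.ncard = n * a + n * (t - 1) + γ := by
    rw [aux_ncard_decomp]
    have e1 : {i : V | Sum.inl i ∈ S₀} = Dm := rfl
    have e2 : ∀ i : V, {c : Fin t | Sum.inr (i, Sum.inl c) ∈ S₀} = ({c₀}ᶜ : Set (Fin t)) := by
      intro i; ext c; simp [hS₀c, Set.mem_compl_iff]
    have e3 : ∀ i : V, {v : V' | Sum.inr (i, Sum.inr v) ∈ S₀} = B := fun i => rfl
    rw [e1, hDmcard,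
      Finset.sum_congr rfl (fun i (_ : i ∈ Finset.univ) => by rw [e2 i, e3 i, hBcard, hcompl]),
      Finset.sum_const, Finset.card_univ, smul_eq_mul, ← hn, Nat.mul_add]
    ring
  -- S₀ is a simultaneous adjacency generator
  have hS₀gen : IsSimAdjGen (coronaFam 𝒢 (joinFam {(⊤ : SimpleGraph (Fin t))} ℋ)) S₀ := by
    rintro K ⟨G, hG, F, hF, rfl⟩
    obtain ⟨Kt, hKt, H, hH, rfl⟩ := hF
    rw [Set.mem_singleton_iff] at hKt
    subst hKt
    have hBH : IsAdjGen H B := hBgen H hH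
    have keyB : ∀ w ∉ B, ∃ b ∈ B, ¬ H.Adj b w := fun w hw => aux_key hV' (hcond H hH) hBH hw
    rintro (i | ⟨i, p⟩) (j | ⟨j, q⟩) hx hy hxy
    · -- hub, hub
      refine ⟨Sum.inr (i, Sum.inl c₁), hc₁, Or.inl ⟨rfl, fun h => ?_⟩⟩
      exact hxy (by rw [show i = j from h])
    · -- hub i, copy (j, q)
      by_cases hij : i = j
      · subst hij
        obtain ⟨d, hd, hadj⟩ := hDmdom G hG i (fun h => hx h)
        refine ⟨Sum.inl d, hd, Or.inl ⟨hadj, fun hcontra => ?_⟩⟩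
        exact hx ((show d = i from hcontra) ▸ hd)
      · refine ⟨Sum.inr (j, Sum.inl c₁), hc₁, Or.inr ⟨⟨rfl, ?_⟩, fun h => hij (show j = i from h).symm⟩⟩
        rcases q with c | v
        · have hcc : c = c₀ := by by_contra hc; exact hy hc
          subst hcc
          exact hc₁
        · trivial
    · -- copy (i, p), hub j
      by_cases hij : j = i
      · subst hij
        obtain ⟨d, hd, hadj⟩ := hDmdom G hG j (fun h => hy h)
        refine ⟨Sum.inl d, hd, Or.inr ⟨hadj, fun hcontra => ?_⟩⟩
        exact hy ((show d = j from hcontra) ▸ hd)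
      · refine ⟨Sum.inr (i, Sum.inl c₁), hc₁, Or.inl ⟨⟨rfl, ?_⟩, fun h => hij (show i = j from h).symm⟩⟩
        rcases p with c | v
        · have hcc : c = c₀ := by by_contra hc; exact hx hc
          subst hcc
          exact hc₁
        · trivial
    · -- copy, copy
      by_cases hij : i = j
      · subst hij
        rcases p with c | v <;> rcases q with c' | v'
        · exfalso
          have h1 : c = c₀ := by by_contra hc; exact hx hc
          have h2 : c' = c₀ := by by_contra hc; exact hy hc
          exact hxy (by rw [h1, h2])
        · obtain ⟨b, hb, hnadj⟩ := keyB v' hy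
          refine ⟨Sum.inr (i, Sum.inr b), hb, Or.inl ⟨⟨rfl, trivial⟩, fun h => hnadj h.2⟩⟩
        · obtain ⟨b, hb, hnadj⟩ := keyB v hx
          refine ⟨Sum.inr (i, Sum.inr b), hb, Or.inr ⟨⟨rfl, trivial⟩, fun h => hnadj h.2⟩⟩
        · have hne : v ≠ v' := fun h => hxy (by rw [h])
          obtain ⟨b, hb, hxor⟩ := hBH v v' hx hy hne
          refine ⟨Sum.inr (i, Sum.inr b), hb, ?_⟩
          rcases hxor with ⟨h1, h2⟩ | ⟨h1, h2⟩
          · exact Or.inl ⟨⟨rfl, h1⟩, fun hcon => h2 hcon.2⟩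
          · exact Or.inr ⟨⟨rfl, h1⟩, fun hcon => h2 hcon.2⟩
      · refine ⟨Sum.inr (i, Sum.inl c₁), hc₁, Or.inl ⟨⟨rfl, ?_⟩, fun h => hij h.1⟩⟩
        rcases p with c | v
        · have hcc : c = c₀ := by by_contra hc; exact hx hc
          subst hcc
          exact hc₁
        · trivial
  -- conclude
  apply le_antisymm
  · exact Nat.sInf_le ⟨S₀, hS₀card, hS₀gen⟩
  · refine le_csInf ⟨n * a + n * (t - 1) + γ, S₀, hS₀card, hS₀gen⟩ ?_
    rintro m ⟨S, hScard, hSgen⟩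
    rw [← hScard]
    -- lower bound
    have hc1 : ∀ i : V, a ≤ {v : V' | Sum.inr (i, Sum.inr v) ∈ S}.ncard := by
      intro i
      have hgen : IsSimAdjGen ℋ {v : V' | Sum.inr (i, Sum.inr v) ∈ S} := by
        intro H hH x y hx hy hne
        have hK : corona G₀ (joinG (⊤ : SimpleGraph (Fin t)) H) ∈
            coronaFam 𝒢 (joinFam {(⊤ : SimpleGraph (Fin t))} ℋ) :=
          ⟨G₀, hG₀, joinG ⊤ H, ⟨⊤, rfl, H, hH, rfl⟩, rfl⟩
        obtain ⟨s, hs, hxor⟩ := hSgen _ hK (Sum.inr (i, Sum.inr x)) (Sum.inr (i, Sum.inr y))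
          hx hy (fun h => hne (by simpa using h))
        rcases s with j | ⟨j, r⟩
        · exfalso
          rcases hxor with ⟨h1, h2⟩ | ⟨h1, h2⟩ <;> exact h2 h1
        · by_cases hji : j = i
          · subst hji
            rcases r with c | b
            · exfalso
              rcases hxor with ⟨h1, h2⟩ | ⟨h1, h2⟩ <;> exact h2 ⟨rfl, trivial⟩
            · refine ⟨b, hs, ?_⟩
              rcases hxor with ⟨h1, h2⟩ | ⟨h1, h2⟩
              · exact Or.inl ⟨h1.2, fun hb => h2 ⟨rfl, hb⟩⟩
              · exact Or.inr ⟨h1.2, fun hb => h2 ⟨rfl, hb⟩⟩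
          · exfalso
            rcases hxor with ⟨h1, _⟩ | ⟨h1, _⟩ <;> exact hji h1.1
      rw [ha, SdA]
      exact Nat.sInf_le ⟨_, rfl, hgen⟩
    have hc2 : ∀ i : V, t - 1 ≤ {c : Fin t | Sum.inr (i, Sum.inl c) ∈ S}.ncard := by
      intro i
      have hcompl1 : ({c : Fin t | Sum.inr (i, Sum.inl c) ∈ S}ᶜ).ncard ≤ 1 := by
        rw [Set.ncard_le_one_iff (Set.toFinite _)]
        intro c c' hc hc'
        by_contra hne
        have hK : corona G₀ (joinG (⊤ : SimpleGraph (Fin t)) H₀) ∈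
            coronaFam 𝒢 (joinFam {(⊤ : SimpleGraph (Fin t))} ℋ) :=
          ⟨G₀, hG₀, joinG ⊤ H₀, ⟨⊤, rfl, H₀, hH₀, rfl⟩, rfl⟩
        obtain ⟨s, hs, hxor⟩ := hSgen _ hK (Sum.inr (i, Sum.inl c)) (Sum.inr (i, Sum.inl c'))
          hc hc' (fun h => hne (by simpa using h))
        rcases s with j | ⟨j, r⟩
        · rcases hxor with ⟨h1, h2⟩ | ⟨h1, h2⟩ <;> exact h2 h1
        · by_cases hji : j = i
          · subst hji
            rcases r with c'' | b
            · have hcc : c'' ≠ c := fun h => hc (h ▸ hs)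
              have hcc' : c'' ≠ c' := fun h => hc' (h ▸ hs)
              rcases hxor with ⟨h1, h2⟩ | ⟨h1, h2⟩
              · exact h2 ⟨rfl, hcc'⟩
              · exact h2 ⟨rfl, hcc⟩
            · rcases hxor with ⟨h1, h2⟩ | ⟨h1, h2⟩ <;> exact h2 ⟨rfl, trivial⟩
          · rcases hxor with ⟨h1, _⟩ | ⟨h1, _⟩ <;> exact hji h1.1
      have hadd := Set.ncard_add_ncard_compl {c : Fin t | Sum.inr (i, Sum.inl c) ∈ S}
        (Set.toFinite _) (Set.toFinite _)
      rw [Nat.card_eq_fintype_card, Fintype.card_fin] at hadd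
      omega
    -- domination
    have hdom : IsSimDomSet 𝒢 {i : V | Sum.inl i ∈ S ∨
        a + t ≤ {c : Fin t | Sum.inr (i, Sum.inl c) ∈ S}.ncard
          + {v : V' | Sum.inr (i, Sum.inr v) ∈ S}.ncard} := by
      intro G hG i hi
      rw [Set.mem_setOf_eq, not_or] at hi
      obtain ⟨hihub, hisize⟩ := hi
      rw [not_le] at hisize
      have hTlt : {c : Fin t | Sum.inr (i, Sum.inl c) ∈ S}.ncard < t := by
        have := hc1 i; omega
      have hune : ∃ u : Fin t, Sum.inr (i, Sum.inl u) ∉ S := by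
        by_contra hall
        push_neg at hall
        have heq : {c : Fin t | Sum.inr (i, Sum.inl c) ∈ S} = Set.univ :=
          Set.eq_univ_of_forall hall
        rw [heq, Set.ncard_univ, Nat.card_eq_fintype_card, Fintype.card_fin] at hTlt
        omega
      obtain ⟨u, hu⟩ := hune
      have hK : corona G (joinG (⊤ : SimpleGraph (Fin t)) H₀) ∈
          coronaFam 𝒢 (joinFam {(⊤ : SimpleGraph (Fin t))} ℋ) :=
        ⟨G, hG, joinG ⊤ H₀, ⟨⊤, rfl, H₀, hH₀, rfl⟩, rfl⟩
      obtain ⟨s, hs, hxor⟩ := hSgen _ hK (Sum.inl i) (Sum.inr (i, Sum.inl u)) hihub hu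
        (fun h => by cases h)
      rcases s with j | ⟨j, r⟩
      · rcases hxor with ⟨h1, h2⟩ | ⟨h1, h2⟩
        · exact ⟨j, Or.inl hs, h1⟩
        · exact absurd ((show j = i from h1) ▸ hs) hihub
      · exfalso
        by_cases hji : j = i
        · subst hji
          rcases r with c | b
          · have hcc : c ≠ u := fun h => hu (h ▸ hs)
            rcases hxor with ⟨h1, h2⟩ | ⟨h1, h2⟩
            · exact h2 ⟨rfl, hcc⟩
            · exact h2 rfl
          · rcases hxor with ⟨h1, h2⟩ | ⟨h1, h2⟩
            · exact h2 ⟨rfl, trivial⟩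
            · exact h2 rfl
        · rcases hxor with ⟨h1, _⟩ | ⟨h1, _⟩
          · exact hji h1
          · exact hji h1.1
    have hγle : γ ≤ {i : V | Sum.inl i ∈ S ∨
        a + t ≤ {c : Fin t | Sum.inr (i, Sum.inl c) ∈ S}.ncard
          + {v : V' | Sum.inr (i, Sum.inr v) ∈ S}.ncard}.ncard := by
      rw [hγ, Sgamma]
      exact Nat.sInf_le ⟨_, rfl, hdom⟩
    have hDle : {i : V | Sum.inl i ∈ S ∨
        a + t ≤ {c : Fin t | Sum.inr (i, Sum.inl c) ∈ S}.ncard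
          + {v : V' | Sum.inr (i, Sum.inr v) ∈ S}.ncard}.ncard
        ≤ {i : V | Sum.inl i ∈ S}.ncard + {i : V |
          a + t ≤ {c : Fin t | Sum.inr (i, Sum.inl c) ∈ S}.ncard
          + {v : V' | Sum.inr (i, Sum.inr v) ∈ S}.ncard}.ncard := by
      refine le_trans (Set.ncard_le_ncard ?_ (Set.toFinite _)) (Set.ncard_union_le _ _)
      intro i hi
      exact hi
    have hsum : n * (a + (t - 1)) + {i : V |
          a + t ≤ {c : Fin t | Sum.inr (i, Sum.inl c) ∈ S}.ncard
          + {v : V' | Sum.inr (i, Sum.inr v) ∈ S}.ncard}.ncard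
        ≤ ∑ i : V, ({c : Fin t | Sum.inr (i, Sum.inl c) ∈ S}.ncard
          + {v : V' | Sum.inr (i, Sum.inr v) ∈ S}.ncard) := by
      classical
      rw [aux_ncard_eq_sum {i : V |
          a + t ≤ {c : Fin t | Sum.inr (i, Sum.inl c) ∈ S}.ncard
          + {v : V' | Sum.inr (i, Sum.inr v) ∈ S}.ncard}]
      rw [show n * (a + (t - 1)) = ∑ _i : V, (a + (t - 1)) by
        rw [Finset.sum_const, Finset.card_univ, smul_eq_mul, ← hn]]
      rw [← Finset.sum_add_distrib]
      apply Finset.sum_le_sum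
      intro i _
      by_cases hiD : i ∈ {i : V |
          a + t ≤ {c : Fin t | Sum.inr (i, Sum.inl c) ∈ S}.ncard
          + {v : V' | Sum.inr (i, Sum.inr v) ∈ S}.ncard}
      · rw [if_pos hiD]
        have hiD' : a + t ≤ {c : Fin t | Sum.inr (i, Sum.inl c) ∈ S}.ncard
          + {v : V' | Sum.inr (i, Sum.inr v) ∈ S}.ncard := hiD
        omega
      · rw [if_neg hiD]
        have := hc1 i
        have := hc2 i
        omega
    have hdecomp := aux_ncard_decomp S
    have hmul : n * a + n * (t - 1) = n * (a + (t - 1)) := (Nat.mul_add n a (t-1)).symm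
    rw [hdecomp]
    linarith [hγle, hDle, hsum, hmul]
end
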